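/- Let (η_k)_{k≥1} be independent, mean-zero real random variables with sup_{λ>0} λ^α P(|η_k| > λ) ≤ K for all k, where α ∈ (1,2) and K > 0. Then for any real sequence (a_k) with ∑_k |a_k|^α < ∞, sup_{λ>0} λ^α P(|∑_k a_k η_k| > λ) ≤ r_α K ∑_k |a_k|^α, where r_α is a constant depending only on α (one may take r_α = 1 + 8/(2-α) + 2α/(α-1)). -/

import Mathlib

open MeasureTheory ProbabilityTheory
open Set

-- generic bound: integral over Ioi 0 of measure-decay function
lemma sq_moment {Ω : Type*} [MeasurableSpace Ω] (μ : Measure Ω) [IsProbabilityMeasure μ]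
    (X : Ω → ℝ) (hX : Measurable X)
    (C α : ℝ) (hC : 0 ≤ C) (hα1 : 1 < α) (hα2 : α < 2)
    (htail : ∀ t : ℝ, 0 < t → μ {ω | t < |X ω|} ≤ ENNReal.ofReal (C * t ^ (-α)))
    (l : ℝ) (hl : 0 < l) :
    (∫ ω, (if |X ω| ≤ l then X ω else 0) ^ 2 ∂μ) ≤ 2 * C / (2 - α) * l ^ ((2:ℝ) - α) := by
  set Y : Ω → ℝ := fun ω => if |X ω| ≤ l then X ω else 0 with hY
  have hYmeas : Measurable Y := Measurable.ite (measurableSet_le hX.abs measurable_const) hX measurable_const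
  have hYbdd : ∀ ω, |Y ω| ≤ l := by
    intro ω
    simp only [hY]
    split
    · assumption
    · simpa using hl.le
  have hYsq_int : Integrable (fun ω => (Y ω)^2) μ := by
    apply (integrable_const (l^2)).mono' (hYmeas.pow_const 2).aestronglyMeasurable
      (ae_of_all _ fun ω => ?_)
    rw [Real.norm_eq_abs, abs_pow]
    exact pow_le_pow_left₀ (abs_nonneg _) (hYbdd ω) 2
  have key := hYsq_int.integral_eq_integral_meas_lt (ae_of_all _ fun ω => sq_nonneg (Y ω))
  rw [key]
  -- bound the layercake integral
  set g : ℝ → ℝ := indicator (Ioc (0:ℝ) (l^2)) (fun t => C * t ^ (-(α/2))) with hg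
  have hgint : Integrable g (volume.restrict (Ioi (0:ℝ))) := by
    rw [hg]
    apply (IntegrableOn.integrable_indicator ?_ measurableSet_Ioc).restrict
    have : IntervalIntegrable (fun t : ℝ => t ^ (-(α/2))) volume 0 (l^2) :=
      intervalIntegral.intervalIntegrable_rpow' (by linarith)
    rw [intervalIntegrable_iff_integrableOn_Ioc_of_le (by positivity)] at this
    exact this.const_mul C
  have hpt : ∀ t ∈ Ioi (0:ℝ), (μ {ω | t < (Y ω)^2}).toReal ≤ g t := by
    intro t ht
    rw [mem_Ioi] at ht
    rcases le_or_gt t (l^2) with h | h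
    · have hsub : {ω | t < (Y ω)^2} ⊆ {ω | Real.sqrt t < |X ω|} := by
        intro ω hω
        simp only [mem_setOf_eq] at hω ⊢
        have h1 : Real.sqrt t < Real.sqrt ((Y ω)^2) := Real.sqrt_lt_sqrt ht.le hω
        rw [Real.sqrt_sq_eq_abs] at h1
        refine h1.trans_le ?_
        simp only [hY]
        split
        · exact le_rfl
        · simpa using abs_nonneg (X ω)
      have hst : (0:ℝ) < Real.sqrt t := Real.sqrt_pos.2 ht
      have h2 : μ {ω | t < (Y ω)^2} ≤ ENNReal.ofReal (C * (Real.sqrt t) ^ (-α)) :=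
        (measure_mono hsub).trans (htail _ hst)
      have h3 : (Real.sqrt t) ^ (-α) = t ^ (-(α/2)) := by
        rw [Real.sqrt_eq_rpow, ← Real.rpow_mul ht.le]
        congr 1
        ring
      rw [h3] at h2
      have h4 := ENNReal.toReal_le_of_le_ofReal (by positivity) h2
      rwa [hg, indicator_of_mem (mem_Ioc.2 ⟨ht, h⟩)]
    · have hempty : {ω | t < (Y ω)^2} = ∅ := by
        ext ω
        simp only [mem_setOf_eq, mem_empty_iff_false, iff_false, not_lt]
        calc (Y ω)^2 = |Y ω|^2 := (sq_abs _).symm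
        _ ≤ l^2 := pow_le_pow_left₀ (abs_nonneg _) (hYbdd ω) 2
        _ ≤ t := h.le
      rw [hempty]
      simp only [measure_empty, ENNReal.toReal_zero]
      exact indicator_nonneg (fun x hx => mul_nonneg hC (Real.rpow_nonneg (le_of_lt hx.1) _)) t
  have hmono : ∫ t in Ioi (0:ℝ), (μ {ω | t < (Y ω)^2}).toReal ≤ ∫ t in Ioi (0:ℝ), g t :=
    integral_mono_of_nonneg (ae_of_all _ fun t => ENNReal.toReal_nonneg) hgint
      ((ae_restrict_iff' measurableSet_Ioi).2 (ae_of_all _ hpt))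
  have hgval : ∫ t in Ioi (0:ℝ), g t = 2 * C / (2 - α) * l ^ ((2:ℝ) - α) := by
    rw [hg, integral_indicator measurableSet_Ioc, Measure.restrict_restrict measurableSet_Ioc,
      inter_eq_self_of_subset_left Ioc_subset_Ioi_self,
      ← intervalIntegral.integral_of_le (by positivity : (0:ℝ) ≤ l^2)]
    rw [intervalIntegral.integral_const_mul, integral_rpow (Or.inl (by linarith))]
    rw [Real.zero_rpow (by intro h; nlinarith)]
    rw [show (l^2 : ℝ) = l ^ ((2:ℝ)) by rw [Real.rpow_two], ← Real.rpow_mul hl.le]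
    rw [show (2:ℝ) * (-(α/2) + 1) = 2 - α by ring]
    field_simp
    ring
  calc _ ≤ ∫ t in Ioi (0:ℝ), g t := hmono
  _ = _ := hgval

lemma trunc_mean {Ω : Type*} [MeasurableSpace Ω] (μ : Measure Ω) [IsProbabilityMeasure μ]
    (X : Ω → ℝ) (hX : Measurable X) (hXi : Integrable X μ) (hX0 : ∫ ω, X ω ∂μ = 0)
    (C α : ℝ) (hC : 0 ≤ C) (hα1 : 1 < α) (hα2 : α < 2)
    (htail : ∀ t : ℝ, 0 < t → μ {ω | t < |X ω|} ≤ ENNReal.ofReal (C * t ^ (-α)))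
    (l : ℝ) (hl : 0 < l) :
    |∫ ω, (if |X ω| ≤ l then X ω else 0) ∂μ| ≤ α / (α - 1) * C * l ^ ((1:ℝ) - α) := by
  set Y : Ω → ℝ := fun ω => if |X ω| ≤ l then X ω else 0 with hY
  set Z : Ω → ℝ := fun ω => if |X ω| ≤ l then 0 else X ω with hZ
  have hYmeas : Measurable Y := Measurable.ite (measurableSet_le hX.abs measurable_const) hX measurable_const
  have hZmeas : Measurable Z := Measurable.ite (measurableSet_le hX.abs measurable_const) measurable_const hX
  have hZabs : ∀ ω, |Z ω| ≤ |X ω| := by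
    intro ω; simp only [hZ]; split
    · simpa using abs_nonneg (X ω)
    · exact le_rfl
  have hZint : Integrable Z μ := hXi.mono hZmeas.aestronglyMeasurable (ae_of_all _ fun ω => by
    simpa [Real.norm_eq_abs] using hZabs ω)
  have hYint : Integrable Y μ := by
    apply (integrable_const l).mono' hYmeas.aestronglyMeasurable (ae_of_all _ fun ω => ?_)
    rw [Real.norm_eq_abs]
    simp only [hY]; split
    · assumption
    · simpa using hl.le
  have hsplit : ∫ ω, Y ω ∂μ + ∫ ω, Z ω ∂μ = 0 := by
    rw [← integral_add hYint hZint, ← hX0]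
    congr 1; funext ω
    simp only [hY, hZ]; split <;> ring
  have habs : |∫ ω, Y ω ∂μ| ≤ ∫ ω, |Z ω| ∂μ := by
    have : ∫ ω, Y ω ∂μ = -∫ ω, Z ω ∂μ := by linarith
    rw [this, abs_neg]
    calc |∫ ω, Z ω ∂μ| = ‖∫ ω, Z ω ∂μ‖ := (Real.norm_eq_abs _).symm
    _ ≤ ∫ ω, ‖Z ω‖ ∂μ := norm_integral_le_integral_norm Z
    _ = ∫ ω, |Z ω| ∂μ := by simp [Real.norm_eq_abs]
  have key := (hZint.abs).integral_eq_integral_meas_lt (ae_of_all _ fun ω => abs_nonneg (Z ω))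
  set g : ℝ → ℝ := fun t => C * (max l t) ^ (-α) with hgdef
  have hIoc : EqOn g (fun _ => C * l ^ (-α)) (Ioc 0 l) := by
    intro t ht; simp only [hgdef, max_eq_left ht.2]
  have hIoi : EqOn g (fun t => C * t ^ (-α)) (Ioi l) := by
    intro t ht; simp only [hgdef, max_eq_right (le_of_lt (show l < t from ht))]
  have hg1 : IntegrableOn g (Ioc 0 l) := by
    rw [integrableOn_congr_fun hIoc measurableSet_Ioc]
    exact integrableOn_const (by simp [Real.volume_Ioc])
  have hg2 : IntegrableOn g (Ioi l) := by
    rw [integrableOn_congr_fun hIoi measurableSet_Ioi]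
    exact (integrableOn_Ioi_rpow_of_lt (by linarith) hl).const_mul C
  have hgint : Integrable g (volume.restrict (Ioi (0:ℝ))) := by
    have := hg1.union hg2
    rwa [Ioc_union_Ioi_eq_Ioi hl.le] at this
  have hpt : ∀ t ∈ Ioi (0:ℝ), (μ {ω | t < |Z ω|}).toReal ≤ g t := by
    intro t ht
    rw [mem_Ioi] at ht
    have hsub : {ω | t < |Z ω|} ⊆ {ω | max l t < |X ω|} := by
      intro ω hω
      simp only [mem_setOf_eq] at hω ⊢
      by_cases hcase : |X ω| ≤ l
      · exfalso; simp only [hZ, if_pos hcase] at hω; simp at hω; linarith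
      · push_neg at hcase
        simp only [hZ, if_neg (not_le.2 hcase)] at hω
        exact max_lt hcase hω
    have hmaxpos : (0:ℝ) < max l t := lt_max_of_lt_left hl
    have h2 : μ {ω | t < |Z ω|} ≤ ENNReal.ofReal (C * (max l t) ^ (-α)) :=
      (measure_mono hsub).trans (htail _ hmaxpos)
    exact ENNReal.toReal_le_of_le_ofReal (mul_nonneg hC (Real.rpow_nonneg hmaxpos.le _)) h2
  have hmono : ∫ t in Ioi (0:ℝ), (μ {ω | t < |Z ω|}).toReal ≤ ∫ t in Ioi (0:ℝ), g t :=
    integral_mono_of_nonneg (ae_of_all _ fun t => ENNReal.toReal_nonneg) hgint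
      ((ae_restrict_iff' measurableSet_Ioi).2 (ae_of_all _ hpt))
  have hgval : ∫ t in Ioi (0:ℝ), g t = α / (α - 1) * C * l ^ ((1:ℝ) - α) := by
    rw [← Ioc_union_Ioi_eq_Ioi hl.le,
      setIntegral_union (Ioc_disjoint_Ioi le_rfl) measurableSet_Ioi hg1 hg2,
      setIntegral_congr_fun measurableSet_Ioc hIoc, setIntegral_congr_fun measurableSet_Ioi hIoi,
      setIntegral_const, MeasureTheory.integral_const_mul, integral_Ioi_rpow_of_lt (by linarith) hl]
    rw [measureReal_def, Real.volume_Ioc, smul_eq_mul, sub_zero, ENNReal.toReal_ofReal hl.le]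
    have h1 : l * (C * l ^ (-α)) = C * l ^ ((1:ℝ) - α) := by
      rw [show (1:ℝ) - α = 1 + (-α) by ring, Real.rpow_add hl, Real.rpow_one]
      ring
    have hne1 : (1:ℝ) - α ≠ 0 := by intro h; linarith
    have hne2 : α - 1 ≠ 0 := by intro h; linarith
    have h2 : C * (-l ^ (-α + 1) / (-α + 1)) = C * l ^ ((1:ℝ) - α) / (α - 1) := by
      rw [show (-α + 1 : ℝ) = 1 - α by ring]
      field_simp
      ring
    rw [h1, h2]
    field_simp
    ring
  calc |∫ ω, Y ω ∂μ| ≤ ∫ ω, |Z ω| ∂μ := habs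
  _ = ∫ t in Ioi (0:ℝ), (μ {ω | t < |Z ω|}).toReal := key
  _ ≤ ∫ t in Ioi (0:ℝ), g t := hmono
  _ = _ := hgval

theorem stmt4 {Ω : Type*} [MeasurableSpace Ω] (μ : Measure Ω) [IsProbabilityMeasure μ]
    (η : ℕ → Ω → ℝ) (hmeas : ∀ k, Measurable (η k))
    (hindep : iIndepFun η μ)
    (hint : ∀ k, Integrable (η k) μ) (hmean : ∀ k, ∫ ω, η k ω ∂μ = 0)
    (K α : ℝ) (hK : 0 < K) (hα : α ∈ Set.Ioo (1 : ℝ) 2)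
    (htail : ∀ k, ∀ l : ℝ, 0 < l → l ^ α * (μ {ω | l < |η k ω|}).toReal ≤ K)
    (a : ℕ → ℝ) (hsum : Summable (fun k => |a k| ^ α))
    (S : Ω → ℝ) (hS : ∀ᵐ ω ∂μ, HasSum (fun k => a k * η k ω) (S ω)) :
    ∀ l : ℝ, 0 < l →
      l ^ α * (μ {ω | l < |S ω|}).toReal
        ≤ (1 + 8 / (2 - α) + 2 * α / (α - 1)) * K * ∑' k, |a k| ^ α := by
  intro l hl
  obtain ⟨hα1, hα2⟩ := hα
  set r : ℝ := 1 + 8 / (2 - α) + 2 * α / (α - 1) with hr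
  set T : ℝ := ∑' k, |a k| ^ α with hT
  have hT0 : 0 ≤ T := tsum_nonneg fun k => Real.rpow_nonneg (abs_nonneg _) _
  have h2α : (0:ℝ) < 2 - α := by linarith
  have hα1' : (0:ℝ) < α - 1 := by linarith
  have h8 : (0:ℝ) < 8 / (2 - α) := by positivity
  have hlα : 0 < l ^ α := Real.rpow_pos_of_pos hl α
  rcases le_or_gt (l ^ α) (r * K * T) with hcase | hcase
  · calc l ^ α * (μ {ω | l < |S ω|}).toReal ≤ l ^ α * 1 := by
          apply mul_le_mul_of_nonneg_left _ hlα.le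
          rw [← ENNReal.toReal_one]
          exact ENNReal.toReal_mono ENNReal.one_ne_top prob_le_one
    _ ≤ r * K * T := by linarith
  -- main case
  set X : ℕ → Ω → ℝ := fun k ω => a k * η k ω with hX
  have hXmeas : ∀ k, Measurable (X k) := fun k => (hmeas k).const_mul (a k)
  have hXint : ∀ k, Integrable (X k) μ := fun k => (hint k).const_mul (a k)
  have hX0 : ∀ k, ∫ ω, X k ω ∂μ = 0 := fun k => by
    simp only [hX]; rw [MeasureTheory.integral_const_mul, hmean k, mul_zero]
  have hXtail : ∀ k, ∀ t : ℝ, 0 < t →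
      μ {ω | t < |X k ω|} ≤ ENNReal.ofReal (K * |a k| ^ α * t ^ (-α)) := by
    intro k t ht
    rcases eq_or_ne (a k) 0 with h0 | h0
    · have he : {ω | t < |X k ω|} = ∅ := by
        ext ω; simp only [hX, h0, zero_mul, abs_zero, Set.mem_setOf_eq,
          Set.mem_empty_iff_false, iff_false, not_lt]
        exact ht.le
      rw [he]; simp
    · have ha : 0 < |a k| := abs_pos.2 h0
      have hs : {ω | t < |X k ω|} = {ω | t / |a k| < |η k ω|} := by
        ext ω
        simp only [hX, Set.mem_setOf_eq, abs_mul]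
        rw [div_lt_iff₀ ha, mul_comm]
      rw [hs]
      have htd : 0 < t / |a k| := div_pos ht ha
      have hh := htail k (t / |a k|) htd
      have hp : 0 < (t / |a k|) ^ α := Real.rpow_pos_of_pos htd α
      have h2 : (μ {ω | t / |a k| < |η k ω|}).toReal ≤ K * (t / |a k|) ^ (-α) := by
        rw [Real.rpow_neg htd.le, ← div_eq_mul_inv, le_div_iff₀ hp]
        nlinarith [hh]
      have h3 : K * (t / |a k|) ^ (-α) = K * |a k| ^ α * t ^ (-α) := by
        rw [Real.rpow_neg (div_nonneg ht.le ha.le), Real.div_rpow ht.le ha.le,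
          Real.rpow_neg ht.le]
        have h4 : (0:ℝ) < t ^ α := Real.rpow_pos_of_pos ht α
        have h5 : (0:ℝ) < |a k| ^ α := Real.rpow_pos_of_pos ha α
        field_simp
      rw [← h3]
      exact ENNReal.le_ofReal_iff_toReal_le (measure_ne_top μ _)
        (mul_nonneg hK.le (Real.rpow_nonneg htd.le _)) |>.2 h2
  set Y : ℕ → Ω → ℝ := fun k ω => if |X k ω| ≤ l then X k ω else 0 with hYdef
  have hCk : ∀ k, (0:ℝ) ≤ K * |a k| ^ α :=
    fun k => mul_nonneg hK.le (Real.rpow_nonneg (abs_nonneg _) _)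
  have sqb : ∀ k, (∫ ω, (Y k ω) ^ 2 ∂μ) ≤ 2 * (K * |a k| ^ α) / (2 - α) * l ^ ((2:ℝ) - α) :=
    fun k => sq_moment μ (X k) (hXmeas k) (K * |a k| ^ α) α (hCk k) hα1 hα2 (hXtail k) l hl
  have meanb : ∀ k, |∫ ω, Y k ω ∂μ| ≤ α / (α - 1) * (K * |a k| ^ α) * l ^ ((1:ℝ) - α) :=
    fun k => trunc_mean μ (X k) (hXmeas k) (hXint k) (hX0 k) (K * |a k| ^ α) α (hCk k)
      hα1 hα2 (hXtail k) l hl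
  have hYmeas : ∀ k, Measurable (Y k) := fun k =>
    Measurable.ite (measurableSet_le (hXmeas k).abs measurable_const) (hXmeas k) measurable_const
  have hYbdd : ∀ k ω, |Y k ω| ≤ l := by
    intro k ω
    simp only [hYdef]
    split
    · assumption
    · simpa using hl.le
  have hY2 : ∀ k, MemLp (Y k) 2 μ := fun k =>
    MemLp.of_bound (hYmeas k).aestronglyMeasurable l
      (ae_of_all _ fun ω => by rw [Real.norm_eq_abs]; exact hYbdd k ω)
  have hYint : ∀ k, Integrable (Y k) μ := fun k => (hY2 k).integrable one_le_two
  -- independence of truncations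
  have hYindep : iIndepFun Y μ := by
    have := hindep.comp (fun k x => if |a k * x| ≤ l then a k * x else 0) (fun k =>
      Measurable.ite (measurableSet_le (measurable_id.const_mul (a k)).abs measurable_const)
        (measurable_id.const_mul (a k)) measurable_const)
    exact this
  set W : ℕ → Ω → ℝ := fun n => ∑ k ∈ Finset.range n, Y k with hWdef
  have hWmeas : ∀ n, Measurable (W n) := by
    intro n
    have h1 := Finset.measurable_sum (Finset.range n) fun k _ => hYmeas k
    convert h1 using 1
    funext ω
    simp [hWdef, Finset.sum_apply]
  have hW2 : ∀ n, MemLp (W n) 2 μ := fun n => memLp_finsetSum' _ fun k _ => hY2 k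
  set V : ℝ := 2 * K / (2 - α) * l ^ ((2:ℝ) - α) * T with hVdef
  have hvar : ∀ n, variance (W n) μ ≤ V := by
    intro n
    rw [hWdef, IndepFun.variance_sum (fun k _ => hY2 k)
      (fun i _ j _ hij => hYindep.indepFun hij)]
    have hstep : ∀ k, variance (Y k) μ ≤ (2 * K / (2 - α) * l ^ ((2:ℝ) - α)) * |a k| ^ α := by
      intro k
      have h1 : variance (Y k) μ ≤ μ[(Y k) ^ 2] :=
        variance_le_expectation_sq (hYmeas k).aestronglyMeasurable
      have h2 : μ[(Y k) ^ 2] = ∫ ω, (Y k ω) ^ 2 ∂μ := by simp [Pi.pow_apply]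
      calc variance (Y k) μ ≤ ∫ ω, (Y k ω) ^ 2 ∂μ := h2 ▸ h1
      _ ≤ 2 * (K * |a k| ^ α) / (2 - α) * l ^ ((2:ℝ) - α) := sqb k
      _ = (2 * K / (2 - α) * l ^ ((2:ℝ) - α)) * |a k| ^ α := by ring
    calc ∑ k ∈ Finset.range n, variance (Y k) μ
        ≤ ∑ k ∈ Finset.range n, (2 * K / (2 - α) * l ^ ((2:ℝ) - α)) * |a k| ^ α :=
          Finset.sum_le_sum fun k _ => hstep k
    _ = (2 * K / (2 - α) * l ^ ((2:ℝ) - α)) * ∑ k ∈ Finset.range n, |a k| ^ α := by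
          rw [Finset.mul_sum]
    _ ≤ V := by
          rw [hVdef]
          have hsum' : ∑ k ∈ Finset.range n, |a k| ^ α ≤ T :=
            Summable.sum_le_tsum _ (fun k _ => Real.rpow_nonneg (abs_nonneg _) _) hsum
          exact mul_le_mul_of_nonneg_left hsum'
            (mul_nonneg (div_nonneg (by positivity) h2α.le) (Real.rpow_nonneg hl.le _))
  set cT : ℝ := α / (α - 1) * K * T * l ^ ((1:ℝ) - α) with hcTdef
  have hcT0 : 0 ≤ cT := by positivity
  have hmb : ∀ n, |∫ ω, W n ω ∂μ| ≤ cT := by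
    intro n
    have h1 : ∫ ω, W n ω ∂μ = ∑ k ∈ Finset.range n, ∫ ω, Y k ω ∂μ := by
      rw [hWdef]
      rw [show (∫ ω, (∑ k ∈ Finset.range n, Y k) ω ∂μ) = ∫ ω, ∑ k ∈ Finset.range n, Y k ω ∂μ
        from by simp [Finset.sum_apply]]
      exact integral_finset_sum _ fun k _ => hYint k
    rw [h1]
    calc |∑ k ∈ Finset.range n, ∫ ω, Y k ω ∂μ| ≤ ∑ k ∈ Finset.range n, |∫ ω, Y k ω ∂μ| :=
          Finset.abs_sum_le_sum_abs _ _
    _ ≤ ∑ k ∈ Finset.range n, (α / (α - 1) * K * l ^ ((1:ℝ) - α)) * |a k| ^ α := by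
          apply Finset.sum_le_sum fun k _ => ?_
          calc |∫ ω, Y k ω ∂μ| ≤ α / (α - 1) * (K * |a k| ^ α) * l ^ ((1:ℝ) - α) := meanb k
          _ = (α / (α - 1) * K * l ^ ((1:ℝ) - α)) * |a k| ^ α := by ring
    _ = (α / (α - 1) * K * l ^ ((1:ℝ) - α)) * ∑ k ∈ Finset.range n, |a k| ^ α := by
          rw [Finset.mul_sum]
    _ ≤ cT := by
          rw [hcTdef]
          have hsum' : ∑ k ∈ Finset.range n, |a k| ^ α ≤ T :=
            Summable.sum_le_tsum _ (fun k _ => Real.rpow_nonneg (abs_nonneg _) _) hsum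
          have hc : (0:ℝ) ≤ α / (α - 1) * K * l ^ ((1:ℝ) - α) := by positivity
          calc (α / (α - 1) * K * l ^ ((1:ℝ) - α)) * ∑ k ∈ Finset.range n, |a k| ^ α
              ≤ (α / (α - 1) * K * l ^ ((1:ℝ) - α)) * T := mul_le_mul_of_nonneg_left hsum' hc
          _ = α / (α - 1) * K * T * l ^ ((1:ℝ) - α) := by ring
  -- cT < l / 2
  have hcT : cT < l / 2 := by
    have key : 2 * α / (α - 1) * K * T ≤ r * K * T := by
      have h9 : 0 ≤ K * T := mul_nonneg hK.le hT0
      have : 2 * α / (α - 1) ≤ r := by rw [hr]; linarith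
      nlinarith
    have key2 : 2 * α / (α - 1) * K * T < l ^ α := lt_of_le_of_lt key hcase
    have hpow : 0 < l ^ ((1:ℝ) - α) := Real.rpow_pos_of_pos hl _
    have hmul := mul_lt_mul_of_pos_right key2 hpow
    have hll : l ^ α * l ^ ((1:ℝ) - α) = l := by
      rw [← Real.rpow_add hl]; norm_num
    rw [hll] at hmul
    have h2eq : 2 * α / (α - 1) * K * T * l ^ ((1:ℝ) - α) = 2 * cT := by rw [hcTdef]; ring
    rw [h2eq] at hmul
    linarith
  set l' : ℝ := (cT + l / 2 + l) / 2 with hl'def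
  have hl'lt : l' < l := by rw [hl'def]; linarith
  have hl'ge : cT + l / 2 ≤ l' := by rw [hl'def]; linarith
  have hl'pos : 0 < l' := by rw [hl'def]; linarith
  -- Chebyshev bound, uniform in n
  have cheb : ∀ n, μ {ω | l' < |W n ω|} ≤ ENNReal.ofReal (V / (l / 2) ^ 2) := by
    intro n
    have hsub : {ω | l' < |W n ω|} ⊆ {ω | l / 2 ≤ |W n ω - μ[W n]|} := by
      intro ω hω
      simp only [Set.mem_setOf_eq] at hω ⊢
      have h1 : |W n ω| - |μ[W n]| ≤ |W n ω - μ[W n]| := abs_sub_abs_le_abs_sub _ _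
      have h2 := hmb n
      linarith
    calc μ {ω | l' < |W n ω|} ≤ μ {ω | l / 2 ≤ |W n ω - μ[W n]|} := measure_mono hsub
    _ ≤ ENNReal.ofReal (variance (W n) μ / (l / 2) ^ 2) :=
        meas_ge_le_variance_div_sq (hW2 n) (by linarith)
    _ ≤ ENNReal.ofReal (V / (l / 2) ^ 2) := ENNReal.ofReal_le_ofReal
        ((div_le_div_iff_of_pos_right (by positivity)).2 (hvar n))
  -- events
  set U : Set Ω := ⋃ k, {ω | l < |X k ω|} with hUdef
  set D : Set Ω := ⋃ N, ⋂ n, ⋂ (_ : N ≤ n), {ω | l' < |W n ω|} with hDdef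
  have hB1 : (0:ℝ) ≤ K * T * l ^ (-α) :=
    mul_nonneg (mul_nonneg hK.le hT0) (Real.rpow_nonneg hl.le _)
  have hV0 : (0:ℝ) ≤ V := by
    rw [hVdef]
    exact mul_nonneg (mul_nonneg (div_nonneg (by positivity) h2α.le)
      (Real.rpow_nonneg hl.le _)) hT0
  have hB2 : (0:ℝ) ≤ V / (l / 2) ^ 2 := div_nonneg hV0 (by positivity)
  have hUb : μ U ≤ ENNReal.ofReal (K * T * l ^ (-α)) := by
    calc μ U ≤ ∑' k, μ {ω | l < |X k ω|} := measure_iUnion_le _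
    _ ≤ ∑' k, ENNReal.ofReal (K * |a k| ^ α * l ^ (-α)) :=
        ENNReal.tsum_le_tsum fun k => hXtail k l hl
    _ = ENNReal.ofReal (∑' k, K * |a k| ^ α * l ^ (-α)) :=
        (ENNReal.ofReal_tsum_of_nonneg
          (fun k => mul_nonneg (hCk k) (Real.rpow_nonneg hl.le _))
          ((hsum.mul_left K).mul_right _)).symm
    _ = ENNReal.ofReal (K * T * l ^ (-α)) := by
        congr 1
        rw [hT, tsum_mul_right, tsum_mul_left]
  have hDb : μ D ≤ ENNReal.ofReal (V / (l / 2) ^ 2) := by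
    rw [hDdef, Directed.measure_iUnion ?hd]
    · exact iSup_le fun N => le_trans
        (measure_mono (Set.iInter_subset_of_subset N (Set.iInter_subset _ le_rfl))) (cheb N)
    case hd =>
      intro N M
      refine ⟨max N M, fun ω hω => ?_, fun ω hω => ?_⟩ <;>
      · simp only [Set.mem_iInter] at hω ⊢
        intro n hn
        exact hω n (le_trans (by simp) hn)
  have hae : {ω | l < |S ω|} ≤ᵐ[μ] (U ∪ D : Set Ω) := by
    filter_upwards [hS] with ω hω
    intro hmem
    by_cases hu : ω ∈ U
    · exact Or.inl hu
    · right
      rw [hUdef] at hu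
      simp only [Set.mem_iUnion, Set.mem_setOf_eq, not_exists, not_lt] at hu
      have hYX : ∀ k, Y k ω = X k ω := fun k => if_pos (hu k)
      have hWn : (fun n => W n ω) = fun n => ∑ k ∈ Finset.range n, a k * η k ω := by
        funext n
        rw [hWdef]
        simp only [Finset.sum_apply]
        exact Finset.sum_congr rfl fun k _ => hYX k
      have htt0 : Filter.Tendsto (fun n => W n ω) Filter.atTop (nhds (S ω)) := by
        rw [hWn]; exact hω.tendsto_sum_nat
      have htt : Filter.Tendsto (fun n => |W n ω|) Filter.atTop (nhds |S ω|) := htt0.abs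
      have hmem' : l' < |S ω| := lt_trans hl'lt hmem
      obtain ⟨N, hN⟩ := Filter.eventually_atTop.1 (htt.eventually_const_lt hmem')
      rw [hDdef]
      refine Set.mem_iUnion.2 ⟨N, ?_⟩
      simp only [Set.mem_iInter, Set.mem_setOf_eq]
      exact fun n hn => hN n hn
  have hmain : μ {ω | l < |S ω|} ≤ ENNReal.ofReal (K * T * l ^ (-α) + V / (l / 2) ^ 2) := by
    calc μ {ω | l < |S ω|} ≤ μ (U ∪ D) := measure_mono_ae hae
    _ ≤ μ U + μ D := measure_union_le _ _
    _ ≤ ENNReal.ofReal (K * T * l ^ (-α)) + ENNReal.ofReal (V / (l / 2) ^ 2) :=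
        add_le_add hUb hDb
    _ = ENNReal.ofReal (K * T * l ^ (-α) + V / (l / 2) ^ 2) :=
        (ENNReal.ofReal_add hB1 hB2).symm
  have htoReal : (μ {ω | l < |S ω|}).toReal ≤ K * T * l ^ (-α) + V / (l / 2) ^ 2 :=
    ENNReal.toReal_le_of_le_ofReal (by linarith) hmain
  have e1 : l ^ α * (K * T * l ^ (-α)) = K * T := by
    rw [Real.rpow_neg hl.le]
    field_simp
  have hV2 : V / (l / 2) ^ 2 = 8 * K / (2 - α) * T * l ^ (-α) := by
    rw [hVdef]
    have h2 : l ^ ((2:ℝ) - α) = l ^ (-α) * l ^ (2:ℕ) := by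
      rw [show ((2:ℝ) - α) = -α + 2 by ring, Real.rpow_add hl]
      congr 1
      rw [← Real.rpow_natCast l 2]
      norm_num
    rw [h2]
    field_simp
    ring
  have e2 : l ^ α * (8 * K / (2 - α) * T * l ^ (-α)) = 8 * K / (2 - α) * T := by
    rw [Real.rpow_neg hl.le]
    field_simp
  calc l ^ α * (μ {ω | l < |S ω|}).toReal
      ≤ l ^ α * (K * T * l ^ (-α) + V / (l / 2) ^ 2) :=
        mul_le_mul_of_nonneg_left htoReal hlα.le
  _ = K * T + 8 * K / (2 - α) * T := by rw [hV2, mul_add, e1, e2]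
  _ ≤ r * K * T := by
      have hexp : r * K * T = K * T + 8 * K / (2 - α) * T + 2 * α / (α - 1) * (K * T) := by
        rw [hr]; ring
      have h9 : 0 ≤ 2 * α / (α - 1) * (K * T) :=
        mul_nonneg (div_nonneg (by linarith) hα1'.le) (mul_nonneg hK.le hT0)
      linarith
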